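/- Let A be a Noetherian integral domain that is not a field. Suppose that for every pair of nonzero integrally closed ideals I, J of A there exist a natural number n >= 1 and a nonzero integrally closed ideal K of A with \overline{J^n} = \overline{IK} (i.e., the monoid ic(A) under I*J = \overline{IJ} is primary). Then A is a local domain of Krull dimension 1. -/

import Mathlib

/-- `x` satisfies an equation of integral dependence over the ideal `I`:
`x ^ n + a 1 * x ^ (n-1) + ⋯ + a (n-1) * x + a n = 0` with `a i ∈ I ^ i`. -/
def IsIntegralOverIdeal {A : Type*} [CommRing A] (I : Ideal A) (x : A) : Prop :=
  ∃ n : ℕ, 0 < n ∧ ∃ a : ℕ → A, (∀ i, 1 ≤ i → i ≤ n → a i ∈ I ^ i) ∧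
    x ^ n + ∑ i ∈ Finset.Icc 1 n, a i * x ^ (n - i) = 0

/-- The integral closure `\overline{I}` of an ideal `I`.  The set of elements integral
over `I` is in fact an ideal, so taking the ideal span of this set does not change it. -/
def intCl {A : Type*} [CommRing A] (I : Ideal A) : Ideal A :=
  Ideal.span {x | IsIntegralOverIdeal I x}

lemma le_intCl {A : Type*} [CommRing A] (I : Ideal A) : I ≤ intCl I := by
  intro x hx
  apply Ideal.subset_span
  refine ⟨1, one_pos, fun i => if i = 1 then -x else 0, ?_, ?_⟩
  · intro i h1 h2
    have : i = 1 := le_antisymm h2 h1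
    subst this
    simpa using I.neg_mem hx
  · simp

lemma intCl_mono {A : Type*} [CommRing A] {I J : Ideal A} (h : I ≤ J) :
    intCl I ≤ intCl J := by
  apply Ideal.span_mono
  rintro x ⟨n, hn, a, ha, heq⟩
  exact ⟨n, hn, a, fun i h1 h2 => Ideal.pow_right_mono h i (ha i h1 h2), heq⟩

lemma intCl_prime {A : Type*} [CommRing A] {p : Ideal A} (hp : p.IsPrime) :
    intCl p = p := by
  refine le_antisymm (Ideal.span_le.mpr ?_) (le_intCl p)
  rintro x ⟨n, hn, a, ha, heq⟩
  have hsum : ∑ i ∈ Finset.Icc 1 n, a i * x ^ (n - i) ∈ p := by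
    apply Ideal.sum_mem
    intro i hi
    simp only [Finset.mem_Icc] at hi
    exact p.mul_mem_right _ (Ideal.pow_le_self (by omega) (ha i hi.1 hi.2))
  have hxn : x ^ n ∈ p := by
    have : x ^ n = -∑ i ∈ Finset.Icc 1 n, a i * x ^ (n - i) :=
      eq_neg_of_add_eq_zero_left heq
    rw [this]; exact p.neg_mem hsum
  exact hp.mem_of_pow_mem n hxn

/-- If the monoid of nonzero integrally closed ideals of a Noetherian domain (not a field)
is primary, then the domain is local of Krull dimension one. -/
theorem primary_implies_dim_one_local {A : Type*} [CommRing A] [IsDomain A] [IsNoetherianRing A]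
    (hA : ¬ IsField A)
    (hprim : ∀ I J : Ideal A, I ≠ ⊥ → intCl I = I → J ≠ ⊥ → intCl J = J →
      ∃ n : ℕ, 1 ≤ n ∧ ∃ K : Ideal A, K ≠ ⊥ ∧ intCl K = K ∧ intCl (J ^ n) = intCl (I * K)) :
    IsLocalRing A ∧ ringKrullDim A = 1 := by
  -- any two nonzero primes satisfy q ≤ p
  have key : ∀ p q : Ideal A, p.IsPrime → p ≠ ⊥ → q.IsPrime → q ≠ ⊥ → q ≤ p := by
    intro p q hp hp0 hq hq0
    obtain ⟨n, hn, K, hK0, hKcl, heq⟩ :=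
      hprim p q hp0 (intCl_prime hp) hq0 (intCl_prime hq)
    have : q ^ n ≤ p := by
      calc q ^ n ≤ intCl (q ^ n) := le_intCl _
        _ = intCl (p * K) := heq
        _ ≤ intCl p := intCl_mono Ideal.mul_le_left
        _ = p := intCl_prime hp
    exact hp.le_of_pow_le this
  have keyeq : ∀ p q : Ideal A, p.IsPrime → p ≠ ⊥ → q.IsPrime → q ≠ ⊥ → q = p := by
    intro p q hp hp0 hq hq0
    exact le_antisymm (key p q hp hp0 hq hq0) (key q p hq hq0 hp hp0)
  obtain ⟨m, hm⟩ := Ideal.exists_maximal A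
  have hm0 : m ≠ ⊥ := (Ideal.bot_lt_of_maximal m hA).ne'
  have hlocal : IsLocalRing A := by
    apply IsLocalRing.of_unique_max_ideal
    refine ⟨m, hm, ?_⟩
    intro m' hm'
    exact keyeq m m' hm.isPrime hm0 hm'.isPrime (Ideal.bot_lt_of_maximal m' hA).ne'
  refine ⟨hlocal, ?_⟩
  -- Krull dimension
  have : Nonempty (PrimeSpectrum A) := ⟨⟨m, hm.isPrime⟩⟩
  rw [ringKrullDim, Order.krullDim_eq_iSup_length]
  have hle : ∀ P : LTSeries (PrimeSpectrum A), P.length ≤ 1 := by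
    intro P
    by_contra h
    push_neg at h
    have h2 : 2 ≤ P.length := h
    have l01 : P.toFun ⟨0, by omega⟩ < P.toFun ⟨1, by omega⟩ :=
      P.strictMono (by simp [Fin.lt_def])
    have l12 : P.toFun ⟨1, by omega⟩ < P.toFun ⟨2, by omega⟩ :=
      P.strictMono (by simp [Fin.lt_def])
    set p1 := P.toFun ⟨1, by omega⟩ with hp1def
    set p2 := P.toFun ⟨2, by omega⟩ with hp2def
    have hp1 : p1.asIdeal ≠ ⊥ := by
      intro hb
      have h01 : (P.toFun ⟨0, by omega⟩).asIdeal < p1.asIdeal := l01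
      rw [hb] at h01
      exact (not_lt_bot h01)
    have hp2 : p2.asIdeal ≠ ⊥ := by
      intro hb
      have h12 : p1.asIdeal < p2.asIdeal := l12
      rw [hb] at h12
      exact (not_lt_bot h12)
    have heq2 := keyeq p1.asIdeal p2.asIdeal p1.isPrime hp1 p2.isPrime hp2
    have : p1 = p2 := PrimeSpectrum.ext heq2.symm
    exact l12.ne this
  have hsup : (⨆ p : LTSeries (PrimeSpectrum A), (p.length : ℕ∞)) = 1 := by
    apply le_antisymm
    · exact iSup_le fun P => by exact_mod_cast hle P
    · have hbotm : (⟨⊥, Ideal.bot_prime⟩ : PrimeSpectrum A) < ⟨m, hm.isPrime⟩ := by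
        show (⊥ : Ideal A) < m
        exact Ideal.bot_lt_of_maximal m hA
      let P : LTSeries (PrimeSpectrum A) :=
        ⟨1, ![⟨⊥, Ideal.bot_prime⟩, ⟨m, hm.isPrime⟩], by
          intro i
          fin_cases i
          simpa using hbotm⟩
      have : (1 : ℕ∞) = (P.length : ℕ∞) := rfl
      rw [this]
      exact le_iSup (fun Q : LTSeries (PrimeSpectrum A) => (Q.length : ℕ∞)) P
  rw [hsup]
  rfl
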